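/- Let (z_j)_{j≥0} be a strictly increasing sequence with z_0=0, z_1=1/2, z_j ↗ 1, set λ_j := z_{j+1} − z_j and s_j := (1 − 2^{-j})/λ_j, and assume inf_{j≥1} s_j > 1. Let T:[0,1)→[0,1) be defined by Tx = 2x on [0,1/2) and, for each j ≥ 1, by the decreasing affine bijection from Z_j := [z_j, z_{j+1}) onto [2^{-j}, 1). Let Y_j := [2^{-(j+1)}, 2^{-j}) for j ≥ 0, and let μ ≪ λ be a T-invariant probability measure whose density has a version constant on each Y_j. If there is k_0 ≥ 1 such that λ_{i+1} ≤ 2^{-(i+3)} λ_i for all i ≥ k_0, then μ(Y_{k+1}) ≤ 2^{-(k+1)} μ(Y_k) for all k ≥ k_0, and consequently Σ_{j>k} μ(Y_j) = o(μ(Y_k)) as k → ∞. -/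
import Mathlib

open MeasureTheory Filter Set Topology
open scoped ENNReal

/-- First hitting time `φ_E` (values in `ℝ≥0∞`; `∞` if the orbit never hits `E`). -/
noncomputable def hitTime {X : Type*} (T : X → X) (E : Set X) (x : X) : ℝ≥0∞ :=
  sInf {t : ℝ≥0∞ | ∃ n : ℕ, 1 ≤ n ∧ T^[n] x ∈ E ∧ t = (n : ℝ≥0∞)}

/-- First hitting time, `ℕ`-valued (junk value `0` if the orbit never hits `E`). -/
noncomputable def hitN {X : Type*} (T : X → X) (E : Set X) (x : X) : ℕ :=
  sInf {n : ℕ | 1 ≤ n ∧ T^[n] x ∈ E}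

/-- First return map `T_Y`. -/
noncomputable def returnMap {X : Type*} (T : X → X) (Y : Set X) (x : X) : X :=
  T^[hitN T Y x] x

/-- Normalized restriction `μ_Y = μ(Y)⁻¹ μ(Y ∩ ·)`. -/
noncomputable def condMeas {X : Type*} [MeasurableSpace X] (μ : Measure X) (Y : Set X) :
    Measure X := (μ Y)⁻¹ • μ.restrict Y

/-- Convergence in distribution, at continuity points of the limit distribution function,
of `[0,∞]`-valued random variables `f k` on `(X, ν)` to a random variable `R` on `(Ω, P)`. -/
def TendstoInDistrib {X Ω : Type*} [MeasurableSpace X] [MeasurableSpace Ω]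
    (ν : Measure X) (f : ℕ → X → ℝ≥0∞) (P : Measure Ω) (R : Ω → ℝ≥0∞) : Prop :=
  ∀ t : ℝ, ContinuousAt (fun s : ℝ => (P {ω | R ω ≤ ENNReal.ofReal s}).toReal) t →
    Tendsto (fun k => (ν {x | f k x ≤ ENNReal.ofReal t}).toReal) atTop
      (𝓝 ((P {ω | R ω ≤ ENNReal.ofReal t}).toReal))

/-- `f k → ∞` in `ν`-measure. -/
def TendstoInfInMeasure {X : Type*} [MeasurableSpace X] (ν : Measure X)
    (f : ℕ → X → ℝ≥0∞) : Prop :=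
  ∀ N : ℕ, 1 ≤ N → Tendsto (fun k => ν {x | f k x ≤ (N : ℝ≥0∞)}) atTop (𝓝 0)

/-- Points of `Y` can only reach `E` via `E'`. -/
def OnlyReachVia {X : Type*} [MeasurableSpace X] (μ : Measure X) (T : X → X)
    (Y E E' : Set X) : Prop :=
  ∀ n : ℕ, ∀ᵐ x ∂μ.restrict Y, T^[n] x ∈ E → ∃ j ≤ n, T^[j] x ∈ E'

/-- The dyadic interval `Y_j = [2^{-(j+1)}, 2^{-j})`. -/
noncomputable def Yset (j : ℕ) : Set ℝ :=
  Set.Ico ((2 : ℝ) ^ (-(j : ℤ) - 1)) ((2 : ℝ) ^ (-(j : ℤ)))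

/-- The slope `s_j = (1 - 2^{-j})/(z_{j+1} - z_j)`. -/
noncomputable def slopeZ (z : ℕ → ℝ) (j : ℕ) : ℝ :=
  (1 - (2 : ℝ) ^ (-(j : ℤ))) / (z (j + 1) - z j)

lemma zp2pos (m : ℤ) : (0:ℝ) < 2 ^ m := zpow_pos two_pos m

lemma zp2mono {m n : ℤ} (h : m ≤ n) : (2:ℝ)^m ≤ (2:ℝ)^n := zpow_le_zpow_right₀ one_le_two h

lemma zp2half {m : ℤ} (h : m ≤ -1) : (2:ℝ)^m ≤ 1/2 := by
  have := zp2mono h; norm_num at this ⊢; linarith [this]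

lemma aux_lower (z : ℕ → ℝ) (hz : StrictMono z) (hz1 : z 1 = 1 / 2) (hzlt : ∀ j, z j < 1)
    (T : ℝ → ℝ)
    (hTj : ∀ j : ℕ, 1 ≤ j → ∀ x ∈ Set.Ioo (z j) (z (j + 1)),
      T x = 1 - slopeZ z j * (x - z j))
    (μ : Measure ℝ) (hinv : MeasurePreserving T μ μ) (η : ℕ → ℝ≥0∞)
    (hdens : ∀ j : ℕ, ∀ s ⊆ Yset j, MeasurableSet s → μ s = η j * volume s)
    (k : ℕ) (hk : 1 ≤ k) :
    η 0 * ENNReal.ofReal ((2:ℝ) ^ (-(k:ℤ) - 1) * (z (k + 2) - z (k + 1))) ≤ μ (Yset k) := by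
  set a : ℝ := (2:ℝ)^(-(k:ℤ)) with ha
  have hlam : 0 < z (k+2) - z (k+1) := sub_pos.2 (hz (by omega))
  set lam : ℝ := z (k+2) - z (k+1) with hlamdef
  have ha2 : (2:ℝ)^(-(k:ℤ)-1) = a/2 := by
    rw [ha, zpow_sub₀ (two_ne_zero), zpow_one]
  have hapos : 0 < a := zp2pos _
  have hale : a ≤ 1/2 := zp2half (by omega)
  have hden : 0 < 1 - a/2 := by linarith
  have hslope : slopeZ z (k+1) = (1 - a/2)/lam := by
    have e : (-(((k+1):ℕ)) : ℤ) = -(k:ℤ)-1 := by push_cast; ring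
    rw [slopeZ, e, ha2, hlamdef]
  set c : ℝ := z (k+1) + (1 - a) * lam / (1 - a/2) with hc
  have hc1 : z (k+1) ≤ c :=
    le_add_of_nonneg_right (div_nonneg (mul_nonneg (by linarith) hlam.le) hden.le)
  have hD : (1-a)*lam/(1-a/2) * (1-a/2) = (1-a)*lam := div_mul_cancel₀ _ hden.ne'
  have hcz : z (k+2) - c = lam - (1-a)*lam/(1-a/2) := by
    rw [hc, hlamdef]; ring
  have hkey : a/2 * lam ≤ z (k+2) - c := by
    rw [hcz]
    nlinarith [hD, hlam, hden, hapos, sq_nonneg a]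
  have hc2 : c < z (k+2) := by
    have h0 : (0:ℝ) < a/2 * lam := mul_pos (half_pos hapos) hlam
    clear_value a lam c
    linarith
  have hsub : Ioo c (z (k+2)) ⊆ T ⁻¹' (Yset k) := by
    intro x hx
    have hx1 : z (k+1) < x := lt_of_le_of_lt hc1 hx.1
    have hT : T x = 1 - (1 - a/2)/lam * (x - z (k+1)) := by
      rw [hTj (k+1) (by omega) x ⟨hx1, hx.2⟩, hslope]
    have hu1 : (1-a)*lam/(1-a/2) < x - z (k+1) := by
      have := hx.1; rw [hc] at this; linarith
    have hu2 : x - z (k+1) < lam := by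
      have := hx.2; rw [hlamdef]; linarith
    have hu1' : (1-a)*lam < (x - z (k+1)) * (1-a/2) := (div_lt_iff₀ hden).1 hu1
    have hgoal1 : a/2 ≤ T x := by
      rw [hT]
      have hq : (1 - a/2)/lam * (x - z (k+1)) < 1 - a/2 := by
        rw [div_mul_eq_mul_div, div_lt_iff₀ hlam]
        nlinarith
      linarith
    have hgoal2 : T x < a := by
      rw [hT]
      have hq : 1 - a < (1 - a/2)/lam * (x - z (k+1)) := by
        rw [div_mul_eq_mul_div, lt_div_iff₀ hlam]
        nlinarith
      linarith
    simp only [mem_preimage, Yset, mem_Ico, ha2, ← ha]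
    exact ⟨hgoal1, hgoal2⟩
  have hIY : Ioo c (z (k+2)) ⊆ Yset 0 := by
    intro x hx
    have h1 : (1:ℝ)/2 ≤ z (k+1) := hz1 ▸ hz.monotone (by omega)
    simp only [Yset, mem_Ico]
    norm_num
    constructor
    · linarith [hx.1, hc1]
    · linarith [hx.2, hzlt (k+2)]
  calc η 0 * ENNReal.ofReal ((2:ℝ)^(-(k:ℤ)-1) * lam)
      ≤ η 0 * ENNReal.ofReal (z (k+2) - c) := by
        apply mul_le_mul_right
        apply ENNReal.ofReal_le_ofReal
        rw [ha2]; exact hkey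
    _ = η 0 * volume (Ioo c (z (k+2))) := by rw [Real.volume_Ioo]
    _ = μ (Ioo c (z (k+2))) := (hdens 0 _ hIY measurableSet_Ioo).symm
    _ ≤ μ (T ⁻¹' (Yset k)) := measure_mono hsub
    _ = μ (Yset k) := hinv.measure_preimage measurableSet_Ico.nullMeasurableSet

set_option maxHeartbeats 1000000 in
lemma aux_upper (z : ℕ → ℝ) (hz : StrictMono z) (hz0 : z 0 = 0) (hz1 : z 1 = 1 / 2)
    (hzlt : ∀ j, z j < 1) (hzlim : Tendsto z atTop (𝓝 1))
    (T : ℝ → ℝ) (hT0 : ∀ x ∈ Set.Ico (0 : ℝ) (1 / 2), T x = 2 * x)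
    (hTj : ∀ j : ℕ, 1 ≤ j → ∀ x ∈ Set.Ioo (z j) (z (j + 1)),
      T x = 1 - slopeZ z j * (x - z j))
    (μ : Measure ℝ) [IsProbabilityMeasure μ] (hac : μ ≪ volume)
    (hsupp : μ (Set.Ico (0 : ℝ) 1)ᶜ = 0) (hinv : MeasurePreserving T μ μ)
    (η : ℕ → ℝ≥0∞)
    (hdens : ∀ j : ℕ, ∀ s ⊆ Yset j, MeasurableSet s → μ s = η j * volume s)
    (k : ℕ) (hk : 1 ≤ k) :
    μ (Yset (k+1)) ≤
      ∑' r : ℕ, (η 0 * ENNReal.ofReal ((2:ℝ)^(-(k:ℤ)) * (z (k+3+r) - z (k+2+r)))) := by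
  have hzmono := hz.monotone
  set a : ℝ := (2:ℝ)^(-(k:ℤ)) with ha
  have hapos : 0 < a := zp2pos _
  have hale : a ≤ 1/2 := zp2half (by omega)
  have ha2 : (2:ℝ)^(-(k:ℤ)-1) = a/2 := by rw [ha, zpow_sub₀ (two_ne_zero), zpow_one]
  have ha4 : (2:ℝ)^(-(k:ℤ)-2) = a/4 := by
    rw [ha, zpow_sub₀ (two_ne_zero)]; norm_num
  set J : ℕ → Set ℝ := fun i =>
    Ioo (z i + (1 - a/2) * (z (i+1) - z i) / (1 - (2:ℝ)^(-(i:ℤ)))) (z (i+1)) with hJ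
  have hY1 : Yset (k+1) = Ico (a/4) (a/2) := by
    have e1 : (-(((k+1):ℕ)) : ℤ) - 1 = -(k:ℤ)-2 := by push_cast; ring
    have e2 : (-(((k+1):ℕ)) : ℤ) = -(k:ℤ)-1 := by push_cast; ring
    rw [Yset, e1, e2, ha2, ha4]
  have hsplit : μ (Ico (0:ℝ) (a/2)) = μ (Ico (0:ℝ) (a/4)) + μ (Yset (k+1)) := by
    rw [hY1, ← measure_union (Set.Ico_disjoint_Ico_same) measurableSet_Ico,
      Ico_union_Ico_eq_Ico (by positivity) (by linarith)]
  have hpre : μ (Ico (0:ℝ) (a/2)) = μ (T ⁻¹' (Ico (0:ℝ) (a/2))) :=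
    (hinv.measure_preimage measurableSet_Ico.nullMeasurableSet).symm
  have hcover : T ⁻¹' (Ico (0:ℝ) (a/2)) ⊆
      ((Ico (0:ℝ) (a/4) ∪ ⋃ r : ℕ, J (k+2+r)) ∪ range z) ∪ (Set.Ico (0:ℝ) 1)ᶜ := by
    intro x hx
    by_cases h01 : x ∈ Set.Ico (0:ℝ) 1
    · left
      obtain ⟨hx0, hx1⟩ := h01
      have hx' : T x ∈ Ico 0 (a/2) := hx
      by_cases hlow : x < 1/2
      · left; left
        have hTx : T x = 2 * x := hT0 x ⟨hx0, hlow⟩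
        rw [hTx] at hx'
        exact ⟨hx0, by linarith [hx'.2]⟩
      · push_neg at hlow
        have hex : ∃ n, x < z n := (hzlim.eventually (eventually_gt_nhds hx1)).exists
        have h0 : ¬ x < z 0 := by rw [hz0]; push_neg; linarith
        have h1 : ¬ x < z 1 := by rw [hz1]; push_neg; linarith
        have hM0 : Nat.find hex ≠ 0 := fun h => h0 (h ▸ Nat.find_spec hex)
        have hM1 : Nat.find hex ≠ 1 := fun h => h1 (h ▸ Nat.find_spec hex)
        obtain ⟨i, hi1, hzi, hxm⟩ : ∃ i, 1 ≤ i ∧ z i ≤ x ∧ x < z (i+1) := by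
          refine ⟨Nat.find hex - 1, by omega, not_lt.1 (Nat.find_min hex (by omega)), ?_⟩
          have e : Nat.find hex - 1 + 1 = Nat.find hex := by omega
          rw [e]; exact Nat.find_spec hex
        rcases eq_or_lt_of_le hzi with he | hlt
        · right; exact ⟨i, he⟩
        · left; right
          have hxIoo : x ∈ Ioo (z i) (z (i+1)) := ⟨hlt, hxm⟩
          have hTx := hTj i hi1 x hxIoo
          set b : ℝ := (2:ℝ)^(-(i:ℤ)) with hb
          have hbpos : 0 < b := zp2pos _
          have hble : b ≤ 1/2 := zp2half (by omega)
          have hlami : 0 < z (i+1) - z i := sub_pos.2 (hz (by omega))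
          set lam : ℝ := z (i+1) - z i with hlamdef
          have hslope : slopeZ z i = (1 - b)/lam := rfl
          rw [hslope] at hTx
          set u : ℝ := x - z i with hu
          have hupos : 0 < u := by rw [hu]; linarith
          have hult : u < lam := by rw [hu, hlamdef]; linarith [hxIoo.2]
          have hTx2 : T x < a/2 := hx'.2
          rw [hTx] at hTx2
          have hq : (1 - a/2) * lam < (1-b) * u := by
            have h1' : 1 - a/2 < (1-b)/lam * u := by linarith
            have h2 : (1-b)/lam * u = (1-b) * u / lam := by ring
            rw [h2] at h1'
            exact (lt_div_iff₀ hlami).1 h1'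
          have hb2 : b < a/2 := by
            clear_value a b u lam
            nlinarith
          have hik : k + 2 ≤ i := by
            have : (-(i:ℤ)) < -(k:ℤ) - 1 := by
              rw [← ha2] at hb2
              exact (zpow_lt_zpow_iff_right₀ one_lt_two).1 hb2
            omega
          refine mem_iUnion.2 ⟨i - (k+2), ?_⟩
          have e : k+2+(i-(k+2)) = i := by omega
          rw [e, hJ]
          refine ⟨?_, hxIoo.2⟩
          rw [← hlamdef, ← hb]
          have : (1 - a/2) * lam / (1 - b) < u := by
            rw [div_lt_iff₀ (by linarith : (0:ℝ) < 1 - b)]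
            clear_value a b u lam
            nlinarith
          rw [hu] at this
          linarith
    · right; exact h01
  have hJbound : ∀ r : ℕ, μ (J (k+2+r)) ≤ η 0 * ENNReal.ofReal (a * (z (k+3+r) - z (k+2+r))) := by
    intro r
    set i := k + 2 + r with hi
    have hi1 : 1 ≤ i := by omega
    set b : ℝ := (2:ℝ)^(-(i:ℤ)) with hb
    have hbpos : 0 < b := zp2pos _
    have hble : b ≤ 1/2 := zp2half (by omega)
    have hlami : 0 < z (i+1) - z i := sub_pos.2 (hz (by omega))
    set lam : ℝ := z (i+1) - z i with hlamdef
    set l : ℝ := z i + (1 - a/2) * lam / (1 - b) with hl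
    have hJi : J i = Ioo l (z (i+1)) := rfl
    have hlz : z i ≤ l := by
      rw [hl]
      have : 0 ≤ (1 - a/2) * lam / (1 - b) :=
        div_nonneg (mul_nonneg (by linarith) hlami.le) (by linarith)
      linarith
    have hJY : J i ⊆ Yset 0 := by
      intro x hx
      rw [hJi] at hx
      have h1 : (1:ℝ)/2 ≤ z i := hz1 ▸ hzmono hi1
      simp only [Yset, mem_Ico]
      norm_num
      exact ⟨by linarith [hx.1], by linarith [hx.2, hzlt (i+1)]⟩
    have hlen : z (i+1) - l ≤ a * lam := by
      rw [hl]
      have hub : (1 - a/2) * lam ≤ (1 - a/2) * lam / (1 - b) := by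
        rw [le_div_iff₀ (by linarith : (0:ℝ) < 1 - b)]
        have h0 : (0:ℝ) ≤ (1 - a/2) * lam * b :=
          mul_nonneg (mul_nonneg (by linarith) hlami.le) hbpos.le
        clear_value a b lam
        nlinarith
      have : z (i+1) - z i = lam := hlamdef.symm
      clear_value a b lam l
      nlinarith
    calc μ (J i) = η 0 * volume (J i) := hdens 0 _ hJY (by rw [hJi]; exact measurableSet_Ioo)
      _ = η 0 * ENNReal.ofReal (z (i+1) - l) := by rw [hJi, Real.volume_Ioo]
      _ ≤ η 0 * ENNReal.ofReal (a * (z (i+1) - z i)) := by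
          apply mul_le_mul_right
          apply ENNReal.ofReal_le_ofReal
          rw [← hlamdef]; exact hlen
      _ = η 0 * ENNReal.ofReal (a * (z (k+3+r) - z (k+2+r))) := by
          have e1 : i + 1 = k + 3 + r := by omega
          have e2 : i = k + 2 + r := hi
          rw [e1, e2]
  have hrange : μ (range z) = 0 := hac ((countable_range z).measure_zero _)
  have hmain : μ (Ico (0:ℝ) (a/2)) ≤ μ (Ico (0:ℝ) (a/4)) +
      ∑' r : ℕ, (η 0 * ENNReal.ofReal (a * (z (k+3+r) - z (k+2+r)))) := by
    rw [hpre]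
    refine le_trans (measure_mono hcover) ?_
    refine le_trans (measure_union_le _ _) ?_
    rw [hsupp, add_zero]
    refine le_trans (measure_union_le _ _) ?_
    rw [hrange, add_zero]
    refine le_trans (measure_union_le _ _) ?_
    exact add_le_add le_rfl ((measure_iUnion_le _).trans (ENNReal.tsum_le_tsum hJbound))
  rw [hsplit] at hmain
  exact (ENNReal.add_le_add_iff_left (measure_ne_top μ _)).1 hmain

/-- **Fast decay of cylinder lengths forces fast decay of `μ(Y_j)`.**
In the piecewise affine example: if `λ_{i+1} ≤ 2^{-(i+3)} λ_i` for `i ≥ k_0`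
(`λ_i = z_{i+1} - z_i`), then `μ(Y_{k+1}) ≤ 2^{-(k+1)} μ(Y_k)` for `k ≥ k_0`, and
consequently `Σ_{j>k} μ(Y_j) = o(μ(Y_k))` as `k → ∞`. -/
theorem stmt15 (z : ℕ → ℝ) (hz : StrictMono z) (hz0 : z 0 = 0) (hz1 : z 1 = 1 / 2)
    (hzlt : ∀ j, z j < 1) (hzlim : Tendsto z atTop (𝓝 1))
    (hs : ∃ ρ : ℝ, 1 < ρ ∧ ∀ j : ℕ, 1 ≤ j → ρ ≤ slopeZ z j)
    (T : ℝ → ℝ) (hT0 : ∀ x ∈ Set.Ico (0 : ℝ) (1 / 2), T x = 2 * x)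
    (hTj : ∀ j : ℕ, 1 ≤ j → ∀ x ∈ Set.Ioo (z j) (z (j + 1)),
      T x = 1 - slopeZ z j * (x - z j))
    (hmaps : Set.MapsTo T (Set.Ico (0 : ℝ) 1) (Set.Ico (0 : ℝ) 1))
    (μ : Measure ℝ) [IsProbabilityMeasure μ] (hac : μ ≪ volume)
    (hsupp : μ (Set.Ico (0 : ℝ) 1)ᶜ = 0) (hinv : MeasurePreserving T μ μ)
    (η : ℕ → ℝ≥0∞)
    (hdens : ∀ j : ℕ, ∀ s ⊆ Yset j, MeasurableSet s → μ s = η j * volume s)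
    (k0 : ℕ) (hk0 : 1 ≤ k0)
    (hfast : ∀ i : ℕ, k0 ≤ i →
      z (i + 2) - z (i + 1) ≤ (2 : ℝ) ^ (-(i : ℤ) - 3) * (z (i + 1) - z i)) :
    (∀ k : ℕ, k0 ≤ k →
        μ (Yset (k + 1)) ≤ ENNReal.ofReal ((2 : ℝ) ^ (-(k : ℤ) - 1)) * μ (Yset k)) ∧
      Tendsto (fun k : ℕ =>
          (∑' j : ℕ, if k < j then μ (Yset j) else 0).toReal / (μ (Yset k)).toReal)
        atTop (𝓝 0) := by
  have hzmono := hz.monotone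
  have hpart1 : ∀ k : ℕ, k0 ≤ k →
      μ (Yset (k+1)) ≤ ENNReal.ofReal ((2:ℝ)^(-(k:ℤ)-1)) * μ (Yset k) := by
    intro k hkk
    have hk1 : 1 ≤ k := le_trans hk0 hkk
    have hup := aux_upper z hz hz0 hz1 hzlt hzlim T hT0 hTj μ hac hsupp hinv η hdens k hk1
    set lam1 : ℝ := z (k+2) - z (k+1) with hlam1
    set lam2 : ℝ := z (k+3) - z (k+2) with hlam2
    have hlam1pos : 0 < lam1 := sub_pos.2 (hz (by omega))
    have hlam2pos : 0 < lam2 := sub_pos.2 (hz (by omega))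
    have hdecay : ∀ r : ℕ, z (k+3+r) - z (k+2+r) ≤ (1/2)^r * lam2 := by
      intro r; induction r with
      | zero => simp [hlam2]
      | succ n ih =>
        have hf := hfast (k+2+n) (by omega)
        have hnn : 0 ≤ z (k+3+n) - z (k+2+n) := sub_nonneg.2 (hzmono (by omega))
        have e1 : k+2+n+2 = k+3+(n+1) := by omega
        have e2 : k+2+n+1 = k+2+(n+1) := by omega
        have e3 : k+2+n+1 = k+3+n := by omega
        have hle : (2:ℝ)^(-(((k+2+n):ℕ):ℤ)-3) ≤ 1/2 := zp2half (by omega)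
        calc z (k+3+(n+1)) - z (k+2+(n+1)) = z (k+2+n+2) - z (k+2+n+1) := by rw [e1, e2]
          _ ≤ (2:ℝ)^(-(((k+2+n):ℕ):ℤ)-3) * (z (k+2+n+1) - z (k+2+n)) := hf
          _ ≤ (1/2) * (z (k+2+n+1) - z (k+2+n)) := by
              apply mul_le_mul_of_nonneg_right hle
              rw [e3]; exact hnn
          _ ≤ (1/2) * ((1/2)^n * lam2) := by
              rw [e3]
              have := mul_le_mul_of_nonneg_left ih (by norm_num : (0:ℝ) ≤ 1/2)
              linarith
          _ = (1/2)^(n+1) * lam2 := by ring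
    have hnn' : ∀ r : ℕ, 0 ≤ (2:ℝ)^(-(k:ℤ)) * (z (k+3+r) - z (k+2+r)) := fun r =>
      mul_nonneg (zp2pos _).le (sub_nonneg.2 (hzmono (by omega)))
    have hgs : Summable (fun r : ℕ => (2:ℝ)^(-(k:ℤ)) * ((1/2)^r * lam2)) :=
      (((summable_geometric_of_lt_one (by norm_num) (by norm_num)).mul_right lam2).mul_left _)
    have hsummable : Summable (fun r : ℕ => (2:ℝ)^(-(k:ℤ)) * (z (k+3+r) - z (k+2+r))) :=
      Summable.of_nonneg_of_le hnn'
        (fun r => mul_le_mul_of_nonneg_left (hdecay r) (zp2pos _).le) hgs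
    have htsum : (∑' r : ℕ, (2:ℝ)^(-(k:ℤ)) * (z (k+3+r) - z (k+2+r)))
        ≤ (2:ℝ)^(-(k:ℤ)) * (2 * lam2) := by
      have h1 := Summable.tsum_le_tsum
        (fun r => mul_le_mul_of_nonneg_left (hdecay r) (zp2pos _).le) hsummable hgs
      have h2 : (∑' r : ℕ, (2:ℝ)^(-(k:ℤ)) * ((1/2)^r * lam2))
          = (2:ℝ)^(-(k:ℤ)) * (2 * lam2) := by
        rw [tsum_mul_left, tsum_mul_right, tsum_geometric_two]
      rw [h2] at h1; exact h1
    have hup2 : μ (Yset (k+1)) ≤ η 0 * ENNReal.ofReal ((2:ℝ)^(-(k:ℤ)) * (2 * lam2)) := by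
      refine hup.trans ?_
      rw [ENNReal.tsum_mul_left, ← ENNReal.ofReal_tsum_of_nonneg hnn' hsummable]
      exact mul_le_mul_right (ENNReal.ofReal_le_ofReal htsum) _
    have hfast1 := hfast (k+1) (by omega)
    have hcast : (-(((k+1):ℕ)):ℤ) - 3 = -(k:ℤ) - 4 := by push_cast; ring
    have hlam2le : lam2 ≤ (2:ℝ)^(-(k:ℤ)-4) * lam1 := by
      rw [hlam2, hlam1, ← hcast]
      exact hfast1
    have key : (2:ℝ)^(-(k:ℤ)) * (2 * lam2)
        ≤ (2:ℝ)^(-(k:ℤ)-1) * ((2:ℝ)^(-(k:ℤ)-1) * lam1) := by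
      have t : (2:ℝ)^(-(k:ℤ)) * 2 * (2:ℝ)^(-(k:ℤ)-4)
          = (2:ℝ)^(-(k:ℤ)-1) * (2:ℝ)^(-(k:ℤ)-2) := by
        have h1 : (2:ℝ)^(-(k:ℤ)) * 2 = (2:ℝ)^(-(k:ℤ)+1) := by
          rw [zpow_add₀ (two_ne_zero : (2:ℝ) ≠ 0), zpow_one]
        rw [h1, ← zpow_add₀ (two_ne_zero : (2:ℝ) ≠ 0),
          ← zpow_add₀ (two_ne_zero : (2:ℝ) ≠ 0)]
        congr 1; ring
      have h24 : (2:ℝ)^(-(k:ℤ)-2) ≤ (2:ℝ)^(-(k:ℤ)-1) := zp2mono (by omega)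
      have hp1 : (0:ℝ) < (2:ℝ)^(-(k:ℤ)-1) := zp2pos _
      have hp2 : (0:ℝ) < (2:ℝ)^(-(k:ℤ)) := zp2pos _
      have step1 : (2:ℝ)^(-(k:ℤ)) * (2 * lam2)
          ≤ (2:ℝ)^(-(k:ℤ)) * (2 * ((2:ℝ)^(-(k:ℤ)-4) * lam1)) := by
        have := mul_le_mul_of_nonneg_left hlam2le (by linarith : (0:ℝ) ≤ 2 * (2:ℝ)^(-(k:ℤ)))
        nlinarith [hlam2le, hp2]
      have step2 : (2:ℝ)^(-(k:ℤ)) * (2 * ((2:ℝ)^(-(k:ℤ)-4) * lam1))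
          = (2:ℝ)^(-(k:ℤ)-1) * ((2:ℝ)^(-(k:ℤ)-2) * lam1) := by
        rw [← mul_assoc, ← mul_assoc]
        rw [show (2:ℝ)^(-(k:ℤ)) * 2 * (2:ℝ)^(-(k:ℤ)-4) * lam1
            = ((2:ℝ)^(-(k:ℤ)) * 2 * (2:ℝ)^(-(k:ℤ)-4)) * lam1 from rfl, t]
        ring
      have step3 : (2:ℝ)^(-(k:ℤ)-1) * ((2:ℝ)^(-(k:ℤ)-2) * lam1)
          ≤ (2:ℝ)^(-(k:ℤ)-1) * ((2:ℝ)^(-(k:ℤ)-1) * lam1) := by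
        have := mul_le_mul_of_nonneg_right h24 hlam1pos.le
        nlinarith [hp1]
      linarith [step1, step2.le, step2.ge, step3]
    calc μ (Yset (k+1)) ≤ η 0 * ENNReal.ofReal ((2:ℝ)^(-(k:ℤ)) * (2 * lam2)) := hup2
      _ ≤ η 0 * ENNReal.ofReal ((2:ℝ)^(-(k:ℤ)-1) * ((2:ℝ)^(-(k:ℤ)-1) * lam1)) :=
          mul_le_mul_right (ENNReal.ofReal_le_ofReal key) _
      _ = ENNReal.ofReal ((2:ℝ)^(-(k:ℤ)-1)) *
          (η 0 * ENNReal.ofReal ((2:ℝ)^(-(k:ℤ)-1) * lam1)) := by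
          rw [ENNReal.ofReal_mul (zp2pos _).le]; ring
      _ ≤ ENNReal.ofReal ((2:ℝ)^(-(k:ℤ)-1)) * μ (Yset k) :=
          mul_le_mul_right (aux_lower z hz hz1 hzlt T hTj μ hinv η hdens k hk1) _
  refine ⟨hpart1, ?_⟩
  have hhalf : ∀ j, k0 ≤ j → μ (Yset (j+1)) ≤ 2⁻¹ * μ (Yset j) := by
    intro j hj
    refine (hpart1 j hj).trans (mul_le_mul_left ?_ _)
    have h1 : ((2:ℝ)^(-(j:ℤ)-1)) ≤ 1/2 := zp2half (by omega)
    calc ENNReal.ofReal ((2:ℝ)^(-(j:ℤ)-1)) ≤ ENNReal.ofReal (1/2) :=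
          ENNReal.ofReal_le_ofReal h1
      _ = 2⁻¹ := by
          rw [one_div, ENNReal.ofReal_inv_of_pos two_pos, ENNReal.ofReal_ofNat]
  have hgeom : ∀ k, k0 ≤ k → ∀ r : ℕ, μ (Yset (k+1+r)) ≤ 2⁻¹^r * μ (Yset (k+1)) := by
    intro k hkk r
    induction r with
    | zero => simp
    | succ n ih =>
      have e : k+1+(n+1) = (k+1+n)+1 := by omega
      rw [e]
      calc μ (Yset ((k+1+n)+1)) ≤ 2⁻¹ * μ (Yset (k+1+n)) := hhalf _ (by omega)
        _ ≤ 2⁻¹ * (2⁻¹^n * μ (Yset (k+1))) := mul_le_mul_right ih _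
        _ = 2⁻¹^(n+1) * μ (Yset (k+1)) := by rw [pow_succ]; ring
  have htail : ∀ k, k0 ≤ k → (∑' j : ℕ, if k < j then μ (Yset j) else 0)
      ≤ ENNReal.ofReal ((2:ℝ)^(-(k:ℤ))) * μ (Yset k) := by
    intro k hkk
    set f : ℕ → ℝ≥0∞ := fun j => if k < j then μ (Yset j) else 0 with hf
    have hinj : Function.Injective (fun r : ℕ => k+1+r) := fun p q h => by
      have h' : k+1+p = k+1+q := h
      omega
    have hzero : ∀ j, j ∉ Set.range (fun r : ℕ => k+1+r) → f j = 0 := by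
      intro j hj
      rw [hf]
      simp only
      rw [if_neg]
      intro hlt
      exact hj ⟨j - (k+1), show k+1+(j-(k+1)) = j by omega⟩
    have hre : (∑' r : ℕ, f (k+1+r)) = ∑' j, f j :=
      ((Function.Injective.hasSum_iff hinj hzero).2 ENNReal.summable.hasSum).tsum_eq
    rw [← hre]
    have hfval : ∀ r : ℕ, f (k+1+r) = μ (Yset (k+1+r)) := fun r => if_pos (by omega)
    calc (∑' r : ℕ, f (k+1+r)) ≤ ∑' r : ℕ, (2⁻¹:ℝ≥0∞)^r * μ (Yset (k+1)) := by
          refine ENNReal.tsum_le_tsum fun r => ?_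
          rw [hfval r]; exact hgeom k hkk r
      _ = (∑' r : ℕ, (2⁻¹:ℝ≥0∞)^r) * μ (Yset (k+1)) := ENNReal.tsum_mul_right
      _ = 2 * μ (Yset (k+1)) := by
          rw [ENNReal.tsum_geometric, ENNReal.one_sub_inv_two, inv_inv]
      _ ≤ 2 * (ENNReal.ofReal ((2:ℝ)^(-(k:ℤ)-1)) * μ (Yset k)) :=
          mul_le_mul_right (hpart1 k hkk) _
      _ = ENNReal.ofReal ((2:ℝ)^(-(k:ℤ))) * μ (Yset k) := by
          rw [← mul_assoc]
          congr 1
          rw [show ((2:ℝ≥0∞)) = ENNReal.ofReal 2 from (ENNReal.ofReal_ofNat 2).symm,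
            ← ENNReal.ofReal_mul (by norm_num : (0:ℝ) ≤ 2)]
          congr 1
          rw [show -(k:ℤ) = (-(k:ℤ)-1)+1 from by ring,
            zpow_add₀ (two_ne_zero : (2:ℝ) ≠ 0), zpow_one]
          ring
  have hto : ∀ k, k0 ≤ k →
      (∑' j : ℕ, if k < j then μ (Yset j) else 0).toReal / (μ (Yset k)).toReal
        ≤ (2:ℝ)^(-(k:ℤ)) := by
    intro k hkk
    have hfin : μ (Yset k) ≠ ⊤ := measure_ne_top μ _
    have hub := htail k hkk
    have hub2 : (∑' j : ℕ, if k < j then μ (Yset j) else 0).toReal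
        ≤ (2:ℝ)^(-(k:ℤ)) * (μ (Yset k)).toReal := by
      refine le_trans (ENNReal.toReal_mono ?_ hub) ?_
      · exact ENNReal.mul_ne_top ENNReal.ofReal_ne_top hfin
      · rw [ENNReal.toReal_mul, ENNReal.toReal_ofReal (zp2pos _).le]
    rcases eq_or_lt_of_le (ENNReal.toReal_nonneg : 0 ≤ (μ (Yset k)).toReal) with h0 | hpos
    · have ht0 : (∑' j : ℕ, if k < j then μ (Yset j) else 0).toReal = 0 := by
        have := hub2
        rw [← h0, mul_zero] at this
        exact le_antisymm this ENNReal.toReal_nonneg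
      rw [ht0, zero_div]
      exact (zp2pos _).le
    · rw [div_le_iff₀ hpos]
      exact hub2
  have hzp : ∀ k : ℕ, (2:ℝ)^(-(k:ℤ)) = (1/2:ℝ)^k := by
    intro k
    rw [zpow_neg, zpow_natCast, one_div, inv_pow]
  apply squeeze_zero' (t₀ := atTop) (g := fun k : ℕ => (1/2:ℝ)^k)
  · exact Eventually.of_forall fun k => div_nonneg ENNReal.toReal_nonneg ENNReal.toReal_nonneg
  · refine eventually_atTop.2 ⟨k0, fun k hkk => ?_⟩
    rw [← hzp k]
    exact hto k hkk
  · exact tendsto_pow_atTop_nhds_zero_of_lt_one (by norm_num) (by norm_num)
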